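/- A finite-dimensional multiplicative Hom-Lie algebra L over an algebraically closed field is nilpotent if and only if it is strongly nilpotent, i.e. there is a chain of ideals 0 = Iₙ ⊴ ⋯ ⊴ I₁ = L with dim Iᵢ/Iᵢ₊₁ = 1 and [L, Iᵢ] ⊆ Iᵢ₊₁ for 1 < i < n. -/

import Mathlib

variable {K L : Type*} [Field K] [AddCommGroup L] [Module K L]

/-- The lower central series of a Hom-Lie algebra: `lcs 0 = L¹ = L` and
`lcs k = Lᵏ⁺¹ = [Lᵏ, L]`. -/
def lcs (br : L →ₗ[K] L →ₗ[K] L) : ℕ → Submodule K L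
  | 0 => ⊤
  | k + 1 => Submodule.span K {z | ∃ x ∈ lcs br k, ∃ y : L, z = br x y}

section aux
variable (br : L →ₗ[K] L →ₗ[K] L) (α : L →ₗ[K] L)

lemma lcs_antitone_succ (k : ℕ) : lcs br (k + 1) ≤ lcs br k := by
  induction k with
  | zero => exact le_top
  | succ k ih =>
    show Submodule.span K _ ≤ Submodule.span K _
    apply Submodule.span_mono
    rintro z ⟨x, hx, y, rfl⟩
    exact ⟨x, ih hx, y, rfl⟩

lemma lcs_antitone : ∀ {j k : ℕ}, j ≤ k → lcs br k ≤ lcs br j := by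
  intro j k h
  induction h with
  | refl => exact le_rfl
  | step h ih => exact le_trans (lcs_antitone_succ br _) ih

lemma mem_lcs_succ {k : ℕ} {x : L} (hx : x ∈ lcs br k) (y : L) :
    br x y ∈ lcs br (k + 1) :=
  Submodule.subset_span ⟨x, hx, y, rfl⟩

lemma br_mem_lcs_succ (hanti : ∀ x y : L, br y x = - br x y) {k : ℕ} (x : L)
    {y : L} (hy : y ∈ lcs br k) : br x y ∈ lcs br (k + 1) := by
  have h1 : br y x ∈ lcs br (k + 1) := mem_lcs_succ br hy x
  rw [hanti y x]
  exact neg_mem h1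

lemma lcs_alpha_invariant (hmult : ∀ x y : L, α (br x y) = br (α x) (α y)) :
    ∀ k : ℕ, ∀ y ∈ lcs br k, α y ∈ lcs br k := by
  intro k
  induction k with
  | zero => intro y _; exact Submodule.mem_top
  | succ k ih =>
    intro y hy
    have : (lcs br (k + 1)).map α ≤ lcs br (k + 1) := by
      show Submodule.map α (Submodule.span K _) ≤ _
      rw [Submodule.map_span, Submodule.span_le]
      rintro z ⟨w, ⟨x, hx, u, rfl⟩, rfl⟩
      exact Submodule.subset_span ⟨α x, ih x hx, α u, hmult x u⟩
    exact this ⟨y, hy, rfl⟩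

open Module in
lemma exists_invariant_hyperplane [IsAlgClosed K] [FiniteDimensional K L]
    (V W : Submodule K L) (hWV : W < V)
    (hαV : ∀ x ∈ V, α x ∈ V) (hαW : ∀ x ∈ W, α x ∈ W) :
    ∃ U : Submodule K L, W ≤ U ∧ U ≤ V ∧ (∀ x ∈ U, α x ∈ U) ∧
      Module.finrank K V = Module.finrank K U + 1 := by
  classical
  set E : V →ₗ[K] V := α.restrict hαV with hE
  set W' : Submodule K V := W.comap V.subtype with hW'
  have hW'top : W' < ⊤ := by
    rcases SetLike.exists_of_lt hWV with ⟨v, hvV, hvW⟩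
    refine lt_top_iff_ne_top.mpr (fun h => hvW ?_)
    have : (⟨v, hvV⟩ : V) ∈ W' := h ▸ Submodule.mem_top
    exact this
  haveI hA : Nontrivial W'.dualAnnihilator := by
    haveI := Submodule.Quotient.nontrivial_iff.mpr hW'top.ne
    exact (Subspace.quotEquivAnnihilator W').symm.toEquiv.nontrivial
  have hDA : ∀ φ ∈ W'.dualAnnihilator, E.dualMap φ ∈ W'.dualAnnihilator := by
    intro φ hφ
    rw [Submodule.mem_dualAnnihilator] at hφ ⊢
    intro w hw
    have hEw : E w ∈ W' := by
      show α (w : L) ∈ W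
      exact hαW _ hw
    exact hφ _ hEw
  set R : Module.End K W'.dualAnnihilator := E.dualMap.restrict hDA with hR
  obtain ⟨c, hc⟩ := Module.End.exists_eigenvalue (K := K) (V := ↥W'.dualAnnihilator) R
  obtain ⟨v, hv⟩ := hc.exists_hasEigenvector
  set φ : Module.Dual K V := (v : Module.Dual K V) with hφdef
  have hφne : φ ≠ 0 := by
    intro h
    exact hv.2 (Subtype.ext h)
  have hφE : ∀ x : V, φ (E x) = c * φ x := by
    intro x
    have h1 : R v = c • v := hv.apply_eq_smul
    have h2 : (R v : Module.Dual K V) = E.dualMap φ := rfl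
    have h3 : E.dualMap φ = c • φ := by
      rw [← h2, h1]; rfl
    have := congrArg (fun f : Module.Dual K V => f x) h3
    simpa using this
  set U' : Submodule K V := LinearMap.ker φ with hU'
  have hrank : Module.finrank K V = Module.finrank K U' + 1 := by
    have h := LinearMap.finrank_range_add_finrank_ker φ
    have hrt : LinearMap.range φ = ⊤ := by
      rcases (by simpa [LinearMap.ext_iff] using hφne :
        ¬ ∀ x : V, φ x = 0) with h'
      push_neg at h'
      obtain ⟨x, hx⟩ := h'
      rw [LinearMap.range_eq_top]
      intro c'
      exact ⟨(c' / φ x) • x, by rw [map_smul, smul_eq_mul, div_mul_cancel₀ _ hx]⟩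
    rw [hrt] at h
    rw [← h, finrank_top, finrank_self]
    ring
  refine ⟨U'.map V.subtype, ?_, ?_, ?_, ?_⟩
  · intro w hw
    have hwV : w ∈ V := le_of_lt hWV hw
    have : (⟨w, hwV⟩ : V) ∈ U' := by
      have hmem : (⟨w, hwV⟩ : V) ∈ W' := hw
      have := v.2
      rw [Submodule.mem_dualAnnihilator] at this
      exact this _ hmem
    exact ⟨⟨w, hwV⟩, this, rfl⟩
  · exact Submodule.map_subtype_le V U'
  · rintro x ⟨u, hu, rfl⟩
    refine ⟨E u, ?_, rfl⟩
    show φ (E u) = 0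
    rw [hφE, LinearMap.mem_ker.mp hu, mul_zero]
  · rw [Submodule.finrank_map_subtype_eq]
    exact hrank

end aux

/-- A finite-dimensional multiplicative Hom-Lie algebra over an algebraically
closed field is nilpotent iff it is strongly nilpotent, i.e. iff there is a chain
of ideals `0 = Iₙ ⊴ ⋯ ⊴ I₁ = L` with one-dimensional quotients `Iᵢ/Iᵢ₊₁` and
`[L, Iᵢ] ⊆ Iᵢ₊₁`. -/
theorem stmt17 [IsAlgClosed K] [FiniteDimensional K L]
    (br : L →ₗ[K] L →ₗ[K] L) (α : L →ₗ[K] L)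
    (hanti : ∀ x y : L, br y x = - br x y)
    (hjac : ∀ x y z : L,
      br (br x y) (α z) + br (br z x) (α y) + br (br y z) (α x) = 0)
    (hmult : ∀ x y : L, α (br x y) = br (α x) (α y)) :
    (∃ m : ℕ, lcs br m = ⊥) ↔
    (∃ (n : ℕ) (I : ℕ → Submodule K L), 1 ≤ n ∧ I 1 = ⊤ ∧ I n = ⊥ ∧
      (∀ i, 1 ≤ i → i < n → I (i + 1) ≤ I i) ∧
      -- each Iᵢ is an ideal of L (bracket-stable and α-invariant)
      (∀ i, 1 ≤ i → i ≤ n → ∀ x : L, ∀ y ∈ I i, br x y ∈ I i ∧ α y ∈ I i) ∧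
      -- codimension-one steps with [L, Iᵢ] ⊆ Iᵢ₊₁
      (∀ i, 1 ≤ i → i < n →
        Module.finrank K (I i) = Module.finrank K (I (i + 1)) + 1 ∧
        ∀ x : L, ∀ y ∈ I i, br x y ∈ I (i + 1))) := by
  classical
  constructor
  · rintro ⟨m, hm⟩
    -- "good" submodules
    set good : Submodule K L → Prop :=
      fun V => (∀ x ∈ V, α x ∈ V) ∧ ∃ k, lcs br (k + 1) ≤ V ∧ V ≤ lcs br k
      with hgood
    have good_br : ∀ V, good V → ∀ x : L, ∀ y ∈ V, br x y ∈ V := by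
      rintro V ⟨_, k, hk1, hk2⟩ x y hy
      exact hk1 (br_mem_lcs_succ br hanti x (hk2 hy))
    have good_bot : good ⊥ := by
      refine ⟨fun x hx => by
        rw [Submodule.mem_bot] at hx ⊢
        rw [hx, map_zero], m, ?_, bot_le⟩
      rw [← hm]
      exact lcs_antitone_succ br m
    -- the step
    have step : ∀ V : Submodule K L, good V → V ≠ ⊥ →
        ∃ U : Submodule K L, good U ∧ U ≤ V ∧
          Module.finrank K V = Module.finrank K U + 1 ∧
          ∀ x : L, ∀ y ∈ V, br x y ∈ U := by
      rintro V ⟨hαV, k₀, hk₀1, hk₀2⟩ hVbot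
      have hex : ∃ i, ¬ V ≤ lcs br i := ⟨m, fun h => hVbot (le_bot_iff.mp (hm ▸ h))⟩
      have hm₁pos : Nat.find hex ≠ 0 := by
        intro h
        exact Nat.find_spec hex (by rw [h]; exact le_top)
      obtain ⟨j, hj⟩ : ∃ j, Nat.find hex = j + 1 :=
        ⟨Nat.find hex - 1, (Nat.succ_pred_eq_of_pos (Nat.pos_of_ne_zero hm₁pos)).symm⟩
      have hm₁spec : ¬ V ≤ lcs br (j + 1) := hj ▸ Nat.find_spec hex
      have hVj : V ≤ lcs br j := not_not.mp (Nat.find_min hex (by omega))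
      have hk₀lt : k₀ < j + 1 := by
        by_contra h
        push_neg at h
        exact hm₁spec (le_trans hk₀2 (lcs_antitone br h))
      have hWV : lcs br (j + 1) < V := by
        refine lt_of_le_of_ne (le_trans (lcs_antitone br (by omega)) hk₀1) ?_
        intro h
        exact hm₁spec (le_of_eq h.symm)
      obtain ⟨U, hWU, hUV, hαU, hrk⟩ :=
        exists_invariant_hyperplane (K := K) α V (lcs br (j + 1)) hWV hαV
          (lcs_alpha_invariant br α hmult (j + 1))
      refine ⟨U, ⟨hαU, j, hWU, le_trans hUV hVj⟩, hUV, hrk, ?_⟩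
      intro x y hy
      exact hWU (br_mem_lcs_succ br hanti x (hVj hy))
    -- build the chain by iteration
    set nxt : Submodule K L → Submodule K L := fun V =>
      if h : good V ∧ V ≠ ⊥ then (step V h.1 h.2).choose else ⊥ with hnxt
    set J : ℕ → Submodule K L := fun i => nxt^[i] ⊤ with hJ
    have hJ0 : J 0 = ⊤ := rfl
    have hJsucc : ∀ i, J (i + 1) = nxt (J i) := by
      intro i
      show nxt^[i + 1] ⊤ = nxt (nxt^[i] ⊤)
      rw [Function.iterate_succ_apply']
    have nxt_pos : ∀ (V : Submodule K L) (h1 : good V) (h2 : V ≠ ⊥),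
        nxt V = (step V h1 h2).choose := by
      intro V h1 h2
      show (if h : good V ∧ V ≠ ⊥ then (step V h.1 h.2).choose else ⊥) = _
      rw [dif_pos (And.intro h1 h2)]
    have nxt_bot : ∀ V : Submodule K L, V = ⊥ → nxt V = ⊥ := by
      intro V h
      show (if h : good V ∧ V ≠ ⊥ then (step V h.1 h.2).choose else ⊥) = ⊥
      rw [dif_neg (by simp [h])]
    have good_J : ∀ i, good (J i) := by
      intro i
      induction i with
      | zero => exact ⟨fun x _ => Submodule.mem_top, 0, le_top, le_rfl⟩
      | succ i ih =>
        rw [hJsucc]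
        by_cases h : J i = ⊥
        · rw [nxt_bot _ h]
          exact good_bot
        · rw [nxt_pos _ ih h]
          exact ((step (J i) ih h).choose_spec).1
    have Jbot : ∀ i, J i = ⊥ → J (i + 1) = ⊥ := by
      intro i h
      rw [hJsucc, nxt_bot _ h]
    have Jstep : ∀ i, J i ≠ ⊥ →
        J (i + 1) ≤ J i ∧
        Module.finrank K (J i) = Module.finrank K (J (i + 1)) + 1 ∧
        ∀ x : L, ∀ y ∈ J i, br x y ∈ J (i + 1) := by
      intro i h
      have hg := good_J i
      have hs := (step (J i) hg h).choose_spec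
      have : J (i + 1) = (step (J i) hg h).choose := by
        rw [hJsucc, nxt_pos _ hg h]
      rw [this]
      exact ⟨hs.2.1, hs.2.2.1, hs.2.2.2⟩
    set N := Module.finrank K L with hN
    have lower : ∀ i, N ≤ Module.finrank K (J i) + i := by
      intro i
      induction i with
      | zero =>
        rw [hJ0, finrank_top, hN]
        omega
      | succ i ih =>
        by_cases h : J i = ⊥
        · have h0 : Module.finrank K (J i) = 0 := by
            rw [h]; exact finrank_bot K L
          omega
        · have := (Jstep i h).2.1
          omega
    have Jne : ∀ i, i < N → J i ≠ ⊥ := by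
      intro i hi hbot
      have := lower i
      rw [hbot, finrank_bot] at this
      omega
    have upper : ∀ i, J i ≠ ⊥ → Module.finrank K (J i) + i = N := by
      intro i
      induction i with
      | zero => intro _; rw [hJ0, finrank_top, hN]; omega
      | succ i ih =>
        intro h
        have hi : J i ≠ ⊥ := fun hb => h (Jbot i hb)
        have h1 := ih hi
        have h2 := (Jstep i hi).2.1
        omega
    have JN : J N = ⊥ := by
      by_contra h
      have := upper N h
      have h0 : Module.finrank K (J N) = 0 := by omega
      exact h (Submodule.finrank_eq_zero.mp h0)
    -- assemble
    refine ⟨N + 1, fun i => J (i - 1), by omega, by simpa using hJ0, by simpa using JN, ?_, ?_, ?_⟩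
    · intro i h1 h2
      show J (i + 1 - 1) ≤ J (i - 1)
      rw [show i + 1 - 1 = i - 1 + 1 by omega]
      by_cases h : J (i - 1) = ⊥
      · rw [Jbot _ h]
        exact bot_le
      · exact (Jstep _ h).1
    · intro i h1 _ x y hy
      exact ⟨good_br _ (good_J (i - 1)) x y hy, (good_J (i - 1)).1 y hy⟩
    · intro i h1 h2
      have hne : J (i - 1) ≠ ⊥ := Jne (i - 1) (by omega)
      have hs := Jstep (i - 1) hne
      have heq : i + 1 - 1 = i - 1 + 1 := by omega
      constructor
      · show Module.finrank K (J (i - 1)) = Module.finrank K (J (i + 1 - 1)) + 1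
        rw [heq]
        exact hs.2.1
      · intro x y hy
        show br x y ∈ J (i + 1 - 1)
        rw [heq]
        exact hs.2.2 x y hy
  · rintro ⟨n, I, hn, hI1, hIn, _, _, hstep⟩
    have key : ∀ j, j + 1 ≤ n → lcs br j ≤ I (j + 1) := by
      intro j
      induction j with
      | zero => intro _; rw [hI1]; exact le_top
      | succ j ih =>
        intro h
        show Submodule.span K _ ≤ _
        rw [Submodule.span_le]
        rintro z ⟨x, hx, y, rfl⟩
        have hxI : x ∈ I (j + 1) := ih (by omega) hx
        have hbr := (hstep (j + 1) (by omega) (by omega)).2 y x hxI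
        have : br x y = - br y x := by rw [hanti y x]
        rw [this]
        exact neg_mem hbr
    refine ⟨n - 1, ?_⟩
    have h := key (n - 1) (by omega)
    rw [show n - 1 + 1 = n by omega, hIn] at h
    exact le_bot_iff.mp h
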